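/- Let π be a connected decorated permutation of [n] with associated connected Grassmann necklace I, and let J be the connected Grassmann necklace associated to the connected decorated permutation π^{-1}. Then the exchange graphs G^I and G^J are isomorphic as simple graphs. -/

import Mathlib

open SimpleGraph

namespace WS

/-- Integers (elements of the cyclically ordered set `[n]`, identified with `Fin n`)
are *cyclically ordered* if some rotation of the list is strictly increasing. -/
def CyclicallyOrdered {n : ℕ} (l : List (Fin n)) : Prop :=
  ∃ k : ℕ, (l.rotate k).Pairwise (· < ·)

/-- Two subsets of `[n]` are *weakly separated*. -/
def WeaklySeparated {n : ℕ} (A B : Finset (Fin n)) : Prop :=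
  ¬ ∃ a b a' b' : Fin n, CyclicallyOrdered [a, b, a', b'] ∧
      a ∈ A \ B ∧ a' ∈ A \ B ∧ b ∈ B \ A ∧ b' ∈ B \ A

/-- The cyclic successor `i + 1` in `[n]`. -/
def cnext {n : ℕ} (i : Fin n) : Fin n := i + ⟨1 % n, Nat.mod_lt 1 i.pos⟩

/-- A (connected) Grassmann necklace. -/
def IsGrassmannNecklace {n : ℕ} (N : Fin n → Finset (Fin n)) : Prop :=
  (∀ i j : Fin n, (N i).card = (N j).card) ∧
    (∀ i : Fin n, cnext i ∈ N (cnext i)) ∧ ∀ i : Fin n, N i \ {i} ⊆ N (cnext i)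

/-- The linear order `<ᵢ` on `[n]` starting at `i`. -/
def cyclicLT {n : ℕ} (i a b : Fin n) : Prop := (a - i).val < (b - i).val

instance {n : ℕ} (i a b : Fin n) : Decidable (cyclicLT i a b) :=
  inferInstanceAs (Decidable ((a - i).val < (b - i).val))

/-- The Gale order `≤ᵢ` : comparing the sorted lists elementwise w.r.t. `≤ᵢ`. -/
def FinsetLE {n : ℕ} (i : Fin n) (A B : Finset (Fin n)) : Prop :=
  List.Forall₂ (· ≤ ·) (Finset.sort (A.image fun x => x - i) (· ≤ ·))
    (Finset.sort (B.image fun x => x - i) (· ≤ ·))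

/-- The positroid associated to a Grassmann necklace. -/
def positroid {n : ℕ} (N : Fin n → Finset (Fin n)) : Set (Finset (Fin n)) :=
  {J | (∀ i, J.card = (N i).card) ∧ ∀ i, FinsetLE i (N i) J}

/-- A weakly separated collection. -/
def IsWSC {n : ℕ} (W : Finset (Finset (Fin n))) : Prop :=
  ∀ A ∈ W, ∀ B ∈ W, WeaklySeparated A B

/-- A weakly separated collection over a Grassmann necklace. -/
def IsWSCOver {n : ℕ} (N : Fin n → Finset (Fin n)) (W : Finset (Finset (Fin n))) : Prop :=
  IsWSC W ∧ ∀ A ∈ W, A ∈ positroid N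

/-- A maximal weakly separated collection over a Grassmann necklace. -/
def IsMaxWSCOver {n : ℕ} (N : Fin n → Finset (Fin n)) (W : Finset (Finset (Fin n))) : Prop :=
  IsWSCOver N W ∧ ∀ W', IsWSCOver N W' → W ⊆ W' → W' = W

/-- `V ∪ {a, b}`. -/
def pairAdd {n : ℕ} (V : Finset (Fin n)) (a b : Fin n) : Finset (Fin n) :=
  insert a (insert b V)

/-- `V₂` is obtained from `V₁` by a mutation. -/
def Mutation {n : ℕ} (V1 V2 : Finset (Finset (Fin n))) : Prop :=
  ∃ (V : Finset (Fin n)) (a b c d : Fin n),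
    CyclicallyOrdered [a, b, c, d] ∧ a ∉ V ∧ b ∉ V ∧ c ∉ V ∧ d ∉ V ∧
    pairAdd V a b ∈ V1 ∧ pairAdd V b c ∈ V1 ∧ pairAdd V c d ∈ V1 ∧
    pairAdd V d a ∈ V1 ∧ pairAdd V a c ∈ V1 ∧
    V2 = insert (pairAdd V b d) (V1.erase (pairAdd V a c))

/-- The type of maximal weakly separated collections over `N`. -/
abbrev MWSC {n : ℕ} (N : Fin n → Finset (Fin n)) : Type :=
  {W : Finset (Finset (Fin n)) // IsMaxWSCOver N W}

/-- The exchange graph of a Grassmann necklace. -/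
def exchangeGraph {n : ℕ} (N : Fin n → Finset (Fin n)) : SimpleGraph (MWSC N) :=
  SimpleGraph.fromRel fun V1 V2 => Mutation V1.1 V2.1

/-- The type of maximal weakly separated collections over `N` containing `C`. -/
abbrev CMWSC {n : ℕ} (N : Fin n → Finset (Fin n)) (C : Finset (Finset (Fin n))) : Type :=
  {W : Finset (Finset (Fin n)) // IsMaxWSCOver N W ∧ C ⊆ W}

/-- The `C`-constant graph `G^I(C)` : the induced subgraph of the exchange graph
on the maximal weakly separated collections containing `C`. -/
def constantGraph {n : ℕ} (N : Fin n → Finset (Fin n)) (C : Finset (Finset (Fin n))) :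
    SimpleGraph (CMWSC N C) :=
  SimpleGraph.fromRel fun V1 V2 => Mutation V1.1 V2.1

/-- The set of distinct subsets appearing in the necklace. -/
def necklaceSet {n : ℕ} (N : Fin n → Finset (Fin n)) : Finset (Finset (Fin n)) :=
  Finset.univ.image N

/-- The necklace `N` has interior size `c`. -/
def HasInteriorSize {n : ℕ} (N : Fin n → Finset (Fin n)) (c : ℕ) : Prop :=
  ∀ W, IsMaxWSCOver N W → W.card = (necklaceSet N).card + c

/-- The `C`-constant graph `G^I(C)` has co-dimension `c`. -/
def HasCodim {n : ℕ} (N : Fin n → Finset (Fin n)) (C : Finset (Finset (Fin n))) (c : ℕ) :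
    Prop :=
  ∀ W, IsMaxWSCOver N W → W.card = C.card + c

/-- Two `k`-element subsets are quasi-adjacent if their intersection has `k - 1` elements. -/
def QuasiAdjacent {n : ℕ} (A B : Finset (Fin n)) : Prop :=
  A.card = B.card ∧ (A ∩ B).card + 1 = A.card

/-- The `C`-constant graph `G^I(C)` is applicable. -/
def Applicable {n : ℕ} (N : Fin n → Finset (Fin n)) (C : Finset (Finset (Fin n))) : Prop :=
  ∀ V ∈ C, ∃ l : List (Finset (Fin n)),
    l.head? = some V ∧ (∀ W ∈ l, W ∈ C) ∧ List.Chain' QuasiAdjacent l ∧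
    ∃ W ∈ necklaceSet N, l.getLast? = some W

/-- The necklace `N` is mutation-friendly: the intersection of all maximal weakly separated
collections over `N` is exactly the necklace. -/
def MutationFriendly {n : ℕ} (N : Fin n → Finset (Fin n)) : Prop :=
  ∀ A : Finset (Fin n), (∀ W, IsMaxWSCOver N W → A ∈ W) ↔ A ∈ necklaceSet N

/-- The `C`-constant graph `G^I(C)` is mutation-friendly. -/
def CMutationFriendly {n : ℕ} (N : Fin n → Finset (Fin n)) (C : Finset (Finset (Fin n))) :
    Prop :=
  ∀ A : Finset (Fin n), (∀ W, IsMaxWSCOver N W → C ⊆ W → A ∈ W) ↔ A ∈ C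

/-- The necklace `N` is very-mutation-friendly. -/
def VeryMutationFriendly {n : ℕ} (N : Fin n → Finset (Fin n)) : Prop :=
  MutationFriendly N ∧
    ∀ i : ℕ, HasInteriorSize N i →
      ∃ W : ℕ → Finset (Finset (Fin n)),
        (∀ j, 1 ≤ j → j ≤ i - 1 →
            IsWSCOver N (W j) ∧ necklaceSet N ⊆ W j ∧
            (W j).card + j = i + (necklaceSet N).card ∧
            Applicable N (W j) ∧ CMutationFriendly N (W j)) ∧
        ∀ j, 1 ≤ j → j + 1 ≤ i - 1 → W (j + 1) ⊆ W j

/-- The circular interval `[i, j)` in `[n]`. -/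
def circInterval {n : ℕ} (i j : Fin n) : Finset (Fin n) :=
  Finset.univ.filter fun x => (x - i).val < (j - i).val

/-- A connected decorated permutation. -/
def IsConnectedPerm {n : ℕ} (π : Equiv.Perm (Fin n)) : Prop :=
  ¬ ∃ i j : Fin n, i ≠ j ∧
      (circInterval i j).image (fun x => π x) = circInterval i j ∧
      (circInterval j i).image (fun x => π x) = circInterval j i

/-- The Grassmann necklace associated to a decorated permutation:
`I_i = {j : j <ᵢ π⁻¹(j)}`. -/
def necklaceOfPerm {n : ℕ} (π : Equiv.Perm (Fin n)) : Fin n → Finset (Fin n) :=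
  fun i => Finset.univ.filter fun j => cyclicLT i j (π⁻¹ j)

/-- `π` is the decorated permutation associated to the necklace `N`:
`π(i) = j` whenever `I_{i+1} = (I_i ∖ {i}) ∪ {j}`. -/
def IsDecoratedPermOf {n : ℕ} (π : Equiv.Perm (Fin n)) (N : Fin n → Finset (Fin n)) : Prop :=
  ∀ i : Fin n, N (cnext i) = insert (π i) ((N i).erase i)

/-- The label-reflection operation `LR^{2i}[π](j) = 2i - π⁻¹(2i - j)`. -/
def LRop {n : ℕ} [NeZero n] (i : Fin n) (π : Equiv.Perm (Fin n)) : Equiv.Perm (Fin n) :=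
  ((Equiv.subLeft (i + i)).trans (π⁻¹ : Equiv.Perm (Fin n))).trans
    (Equiv.subLeft (i + i))

/-- The between-label-reflection operation `BLR^{2i-1}[π](j) = (2i-1) - π⁻¹((2i-1) - j)`. -/
def BLRop {n : ℕ} [NeZero n] (i : Fin n) (π : Equiv.Perm (Fin n)) : Equiv.Perm (Fin n) :=
  ((Equiv.subLeft (i + i - 1)).trans (π⁻¹ : Equiv.Perm (Fin n))).trans
    (Equiv.subLeft (i + i - 1))

/-- The rotation operation `R^i[π](j) = π(j - i) + i`. -/
def Rop {n : ℕ} [NeZero n] (i : Fin n) (π : Equiv.Perm (Fin n)) : Equiv.Perm (Fin n) :=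
  ((Equiv.subRight i).trans π).trans (Equiv.addRight i)

/-- One step in generating the equivalence class of decorated permutations. -/
def PermStep {n : ℕ} [NeZero n] (π σ : Equiv.Perm (Fin n)) : Prop :=
  σ = π⁻¹ ∨ (∃ i : Fin n, σ = LRop i π) ∨
    (Even n ∧ ∃ i : Fin n, σ = BLRop i π) ∨ ∃ i : Fin n, σ = Rop i π

/-- Two decorated permutations belong to the same equivalence class. -/
def PermEquiv {n : ℕ} [NeZero n] (π σ : Equiv.Perm (Fin n)) : Prop :=
  Relation.EqvGen PermStep π σ

/-- `σ` is the permutation `π₁ = 312` (on `[3]`, in `Fin 3` coordinates). -/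
def IsStandardPermOne (σ : Equiv.Perm (Fin 3)) : Prop :=
  σ 1 = 0 ∧ σ 2 = 1 ∧ σ 0 = 2

/-- `σ` is the permutation `π_c` on `[2c]` (for `c ≥ 2`), in `Fin (2c)` coordinates,
where the element `a ∈ [2c]` corresponds to `a % 2c : Fin (2c)`. -/
def IsStandardPerm (c : ℕ) (hc : 2 ≤ c) (σ : Equiv.Perm (Fin (2 * c))) : Prop :=
  ∀ a : ℕ, 1 ≤ a → a ≤ 2 * c →
    σ ⟨a % (2 * c), Nat.mod_lt _ (by omega)⟩ =
      ⟨(if a = 1 then 3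
        else if a ≤ c then 2 * c + 1 - a
        else if a = c + 1 then 1
        else if a = c + 2 then 2
        else 2 * c + 3 - a) % (2 * c), Nat.mod_lt _ (by omega)⟩

/-- The decorated permutation `π` (on `[n]`) belongs to the equivalence class `𝒞_c`
of the permutation `π_c`. -/
def InStandardClass (c : ℕ) {n : ℕ} (π : Equiv.Perm (Fin n)) : Prop :=
  (c = 1 ∧ ∃ h : n = 3, ∃ σ : Equiv.Perm (Fin 3),
      IsStandardPermOne σ ∧ PermEquiv ((finCongr h).permCongr π) σ) ∨
    ∃ hc : 2 ≤ c, ∃ h : n = 2 * c, ∃ σ : Equiv.Perm (Fin (2 * c)),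
      IsStandardPerm c hc σ ∧
      @PermEquiv (2 * c) ⟨by omega⟩ ((finCongr h).permCongr π) σ

/-- The embedding of the elements of `[n]` into `[n + m - 2]` used in gluing (the element
`n` of `[n]`, i.e. `0 : Fin n`, is sent to the element `n` of `[n + m - 2]`). -/
def glueEmbed {n m : ℕ} (hn : 3 ≤ n) (hm : 3 ≤ m) (v : Fin n) : Fin (n + m - 2) :=
  if h : v.val = 0 then ⟨n, by omega⟩ else ⟨v.val, by have := v.isLt; omega⟩

/-- The shifted embedding `b ↦ b + n - 2` of the elements of `[m]` into `[n + m - 2]`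
used in gluing (the element `m` of `[m]`, i.e. `0 : Fin m`, is sent to the element
`n + m - 2`, i.e. `0 : Fin (n + m - 2)`). -/
def glueShift {n m : ℕ} (hn : 3 ≤ n) (hm : 3 ≤ m) (v : Fin m) : Fin (n + m - 2) :=
  if h : v.val = 0 then ⟨0, by omega⟩ else ⟨v.val + n - 2, by have := v.isLt; omega⟩

/-- `π₃` is the decorated permutation of the glued Grassmann necklace `I □ J`, where
`π₁, π₂` are the decorated permutations of `I, J`. -/
def IsGluedPerm {n m : ℕ} (hn : 3 ≤ n) (hm : 3 ≤ m)
    (π1 : Equiv.Perm (Fin n)) (π2 : Equiv.Perm (Fin m))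
    (π3 : Equiv.Perm (Fin (n + m - 2))) : Prop :=
  (∀ a : Fin n, a.val ≠ 0 → (π1 a).val ≠ 0 →
      π3 (glueEmbed hn hm a) = glueEmbed hn hm (π1 a)) ∧
  (∀ a : Fin n, a.val ≠ 0 → (π1 a).val = 0 →
      π3 (glueEmbed hn hm a) = glueShift hn hm (π2 ⟨1, by omega⟩)) ∧
  (∀ a : Fin m, (a.val = 0 ∨ 3 ≤ a.val) → π2 a ≠ ⟨1, by omega⟩ →
      π3 (glueShift hn hm a) = glueShift hn hm (π2 a)) ∧
  (∀ a : Fin m, (a.val = 0 ∨ 3 ≤ a.val) → π2 a = ⟨1, by omega⟩ →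
      π3 (glueShift hn hm a) = glueEmbed hn hm (π1 ⟨0, by omega⟩))

/-- The box product of an arbitrary family of simple graphs. -/
def boxProdFamily {ι : Type*} {V : ι → Type*} (G : ∀ i, SimpleGraph (V i)) :
    SimpleGraph (∀ i, V i) where
  Adj v w := ∃ j, (G j).Adj (v j) (w j) ∧ ∀ l, l ≠ j → v l = w l
  symm := by
    constructor
    rintro v w ⟨j, h, hl⟩
    exact ⟨j, (G j).adj_symm h, fun l hlj => (hl l hlj).symm⟩
  loopless := by
    constructor
    rintro v ⟨j, h, -⟩
    exact (G j).irrefl h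

variable {n : ℕ}


/-- value of subtraction in `Fin n`. -/
lemma sub_val_eq [NeZero n] (y d : Fin n) :
    (y - d).val = if d.val ≤ y.val then y.val - d.val else y.val + n - d.val := by
  have hd := d.isLt
  have hy := y.isLt
  rw [Fin.sub_def]
  simp only
  split
  · next h =>
    have : n - d.val + y.val = (y.val - d.val) + n := by omega
    rw [this, Nat.add_mod_right, Nat.mod_eq_of_lt (by omega)]
  · next h =>
    rw [Nat.mod_eq_of_lt (by omega)]
    omega

lemma card_filter_val_le [NeZero n] (t : ℕ) (ht : t < n) :
    (Finset.univ.filter (fun x : Fin n => x.val ≤ t)).card = t + 1 := by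
  have : Finset.univ.filter (fun x : Fin n => x.val ≤ t)
      = (Finset.range (t + 1)).image (fun m => (⟨m % n, Nat.mod_lt _ (Nat.pos_of_ne_zero (NeZero.ne n))⟩ : Fin n)) := by
    ext x
    simp only [Finset.mem_filter, Finset.mem_univ, true_and, Finset.mem_image, Finset.mem_range]
    constructor
    · intro hx
      exact ⟨x.val, by omega, by ext; simp [Nat.mod_eq_of_lt x.isLt]⟩
    · rintro ⟨m, hm, rfl⟩
      simp [Nat.mod_eq_of_lt (show m < n by omega)]
      omega
  rw [this, Finset.card_image_of_injOn, Finset.card_range]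
  intro a ha b hb hab
  simp only [Finset.mem_range, Finset.coe_range, Set.mem_Iio] at ha hb
  have := congrArg Fin.val hab
  simp only [Nat.mod_eq_of_lt (show a < n by omega), Nat.mod_eq_of_lt (show b < n by omega)] at this
  exact this


/-- counting function: number of elements of `A` within the cyclic interval of
length `t+1` starting at `i`. -/
def cnt [NeZero n] (i : Fin n) (A : Finset (Fin n)) (t : ℕ) : ℕ :=
  (A.filter fun x => (x - i).val ≤ t).card

lemma cnt_eq_card [NeZero n] (i : Fin n) (A : Finset (Fin n)) {t : ℕ} (ht : n ≤ t + 1) :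
    cnt i A t = A.card := by
  unfold cnt
  rw [Finset.filter_true_of_mem]
  intro x _
  have := (x - i).isLt
  omega

lemma card_filter_sub_val_le [NeZero n] (i : Fin n) (t : ℕ) (ht : t < n) :
    (Finset.univ.filter (fun x : Fin n => (x - i).val ≤ t)).card = t + 1 := by
  rw [← card_filter_val_le (n := n) t ht]
  apply Finset.card_nbij (fun x => x - i)
  · intro x hx
    simpa using (by simpa using hx : (x - i).val ≤ t)
  · intro a ha b hb hab
    exact sub_left_injective hab
  · intro y hy
    refine ⟨y + i, ?_, by simp⟩
    simpa using (by simpa using hy : y.val ≤ t)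

lemma cnt_compl [NeZero n] (i : Fin n) (A : Finset (Fin n)) {t : ℕ} (ht : t < n) :
    cnt i Aᶜ t + cnt i A t = t + 1 := by
  unfold cnt
  rw [← card_filter_sub_val_le i t ht]
  rw [← Finset.card_union_of_disjoint]
  · congr 1
    ext x
    by_cases hx : x ∈ A <;> simp [hx]
  · rw [Finset.disjoint_left]
    intro a ha hb
    simp only [Finset.mem_filter, Finset.mem_compl] at ha hb
    exact ha.1 hb.1

lemma cnt_split [NeZero n] (i : Fin n) (A : Finset (Fin n)) {t : ℕ} (ht : t + 1 < n) :
    cnt i A t + cnt (i + ⟨t + 1, by omega⟩) A (n - t - 2) = A.card := by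
  classical
  unfold cnt
  have key : ∀ x : Fin n, ((x - (i + ⟨t + 1, by omega⟩)).val ≤ n - t - 2) ↔ ¬ ((x - i).val ≤ t) := by
    intro x
    have h1 : x - (i + (⟨t + 1, by omega⟩ : Fin n)) = (x - i) - ⟨t + 1, by omega⟩ := by
      rw [sub_add_eq_sub_sub]
    rw [h1, sub_val_eq]
    have := (x - i).isLt
    simp only
    split <;> omega
  rw [Finset.filter_congr (fun x _ => key x)]
  exact Finset.card_filter_add_card_filter_not _


section ListGale

variable {α : Type*} [LinearOrder α]

lemma countP_le_of_forall₂ {la lb : List α}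
    (h : List.Forall₂ (· ≤ ·) la lb) (t : α) :
    lb.countP (fun x => x ≤ t) ≤ la.countP (fun x => x ≤ t) := by
  induction h with
  | nil => simp
  | @cons a b la' lb' hab _ ih =>
    simp only [List.countP_cons]
    by_cases hbt : b ≤ t
    · have hat : a ≤ t := le_trans hab hbt
      simp only [hat, hbt, decide_eq_true_eq, if_true, if_pos]
      omega
    · simp only [hbt, decide_eq_true_eq, if_false, if_neg, not_false_eq_true]
      omega

lemma forall₂_of_countP_le : ∀ {la lb : List α}, la.Pairwise (· < ·) → lb.Pairwise (· < ·) →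
    la.length = lb.length →
    (∀ t : α, lb.countP (fun x => x ≤ t) ≤ la.countP (fun x => x ≤ t)) →
    List.Forall₂ (· ≤ ·) la lb
  | [], [], _, _, _, _ => List.Forall₂.nil
  | [], _ :: _, _, _, hlen, _ => by simp at hlen
  | _ :: _, [], _, _, hlen, _ => by simp at hlen
  | a :: la', b :: lb', ha, hb, hlen, hcnt => by
    have hab : a ≤ b := by
      by_contra hcon
      push_neg at hcon
      have h1 := hcnt b
      have h2 : (a :: la').countP (fun x => x ≤ b) = 0 := by
        rw [List.countP_eq_zero]
        intro x hx
        simp only [decide_eq_true_eq]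
        rcases List.mem_cons.mp hx with rfl | hx
        · exact not_le.mpr hcon
        · exact not_le.mpr (lt_trans hcon ((List.pairwise_cons.mp ha).1 x hx))
      have h3 : 0 < (b :: lb').countP (fun x => x ≤ b) := by
        simp [List.countP_cons]
      omega
    refine List.Forall₂.cons hab (forall₂_of_countP_le (List.pairwise_cons.mp ha).2
      (List.pairwise_cons.mp hb).2 (by simpa using hlen) ?_)
    intro t
    by_cases hbt : b ≤ t
    · have h1 := hcnt t
      have hat : a ≤ t := le_trans hab hbt
      simp only [List.countP_cons, hat, hbt, decide_eq_true_eq, if_true, if_pos] at h1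
      omega
    · have h2 : lb'.countP (fun x => x ≤ t) = 0 := by
        rw [List.countP_eq_zero]
        intro x hx
        simp only [decide_eq_true_eq]
        have hbx : b < x := (List.pairwise_cons.mp hb).1 x hx
        push_neg at hbt
        exact not_le.mpr (lt_trans hbt hbx)
      omega

end ListGale

lemma cnt_eq_countP [NeZero n] (i : Fin n) (A : Finset (Fin n)) (τ : Fin n) :
    cnt i A τ.val
      = (Finset.sort (A.image fun x => x - i) (· ≤ ·)).countP (fun x => x ≤ τ) := by
  have h1 : (A.image fun x => x - i).filter (fun y => y ≤ τ)
      = (A.filter fun x => (x - i).val ≤ τ.val).image (fun x => x - i) := by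
    rw [Finset.filter_image]
    congr 1
  have h2 : cnt i A τ.val = ((A.image fun x => x - i).filter (fun y => y ≤ τ)).card := by
    rw [h1, Finset.card_image_of_injective _ sub_left_injective]
    rfl
  rw [h2]
  have h3 : ∀ (S : Finset (Fin n)) (p : Fin n → Prop) [DecidablePred p],
      (S.filter p).card = (Finset.sort S (· ≤ ·)).countP (fun x => decide (p x)) := by
    intro S p hp
    have : (S.filter p).card = Multiset.countP p S.val := by
      rw [Multiset.countP_eq_card_filter]
      rfl
    rw [this, ← Finset.sort_eq S (· ≤ ·), Multiset.coe_countP]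
  exact h3 _ _

lemma finsetLE_iff_cnt [NeZero n] (i : Fin n) (A B : Finset (Fin n)) (hcard : A.card = B.card) :
    FinsetLE i A B ↔ ∀ t : ℕ, cnt i B t ≤ cnt i A t := by
  constructor
  · intro h t
    by_cases ht : t < n
    · have := countP_le_of_forall₂ h (⟨t, ht⟩ : Fin n)
      rw [cnt_eq_countP i A ⟨t, ht⟩, cnt_eq_countP i B ⟨t, ht⟩]
      exact this
    · rw [cnt_eq_card i A (by omega), cnt_eq_card i B (by omega), hcard]
  · intro h
    apply forall₂_of_countP_le (Finset.sortedLT_sort _).pairwise (Finset.sortedLT_sort _).pairwise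
    · rw [Finset.length_sort, Finset.length_sort,
        Finset.card_image_of_injective _ sub_left_injective,
        Finset.card_image_of_injective _ sub_left_injective, hcard]
    · intro τ
      rw [← cnt_eq_countP i A τ, ← cnt_eq_countP i B τ]
      exact h τ.val

lemma sub_val_inj [NeZero n] (i : Fin n) {a b : Fin n} (h : (a - i).val = (b - i).val) : a = b :=
  sub_left_injective (Fin.val_injective h)

lemma necklace_inv (π : Equiv.Perm (Fin n)) (i : Fin n) :
    necklaceOfPerm π⁻¹ i = Finset.univ.filter fun j => cyclicLT i j (π j) := by
  simp [necklaceOfPerm]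

set_option maxHeartbeats 800000 in
lemma necklace_card_add [NeZero n] (π : Equiv.Perm (Fin n)) (hfix : ∀ x, π x ≠ x) (i : Fin n) :
    (necklaceOfPerm π i).card + (necklaceOfPerm π⁻¹ i).card = n := by
  have h1 : Finset.univ.filter (fun j => cyclicLT i (π j) j)
      = (Finset.univ.filter fun j : Fin n => cyclicLT i j (π⁻¹ j)).image (fun j => π⁻¹ j) := by
    ext x
    simp only [Finset.mem_filter, Finset.mem_univ, true_and, Finset.mem_image]
    constructor
    · intro h
      exact ⟨π x, by simpa using h, by simp⟩
    · rintro ⟨j, hj, rfl⟩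
      simpa using hj
  have h2 : (necklaceOfPerm π i).card = (Finset.univ.filter (fun j => cyclicLT i (π j) j)).card := by
    rw [h1, Finset.card_image_of_injective _ (Equiv.injective _)]
    rfl
  have h3 : necklaceOfPerm π⁻¹ i = Finset.univ.filter (fun j => ¬ cyclicLT i (π j) j) := by
    rw [necklace_inv]
    apply Finset.filter_congr
    intro x _
    unfold cyclicLT
    have hne : (x - i).val ≠ (π x - i).val := fun h => hfix x (sub_val_inj i h).symm
    constructor
    · intro h; omega
    · intro h; omega
  rw [h2, h3, Finset.card_filter_add_card_filter_not]
  simp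

lemma central_identity [NeZero n] (π : Equiv.Perm (Fin n)) (hfix : ∀ x, π x ≠ x)
    (i : Fin n) {t : ℕ} (ht : t + 1 < n) :
    cnt (i + ⟨t + 1, ht⟩) (necklaceOfPerm π i) (n - t - 2)
      + cnt (i + ⟨t + 1, ht⟩) (necklaceOfPerm π⁻¹ (i + ⟨t + 1, ht⟩)) (n - t - 2)
      = n - t - 1 := by
  set i' : Fin n := i + ⟨t + 1, ht⟩ with hi'
  set t' : ℕ := n - t - 2 with ht'
  -- position bookkeeping
  have hsub : ∀ x : Fin n, (x - i').val =
      if t + 1 ≤ (x - i).val then (x - i).val - (t + 1) else (x - i).val + n - (t + 1) := by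
    intro x
    have : x - i' = (x - i) - ⟨t + 1, ht⟩ := by rw [hi', sub_add_eq_sub_sub]
    rw [this, sub_val_eq]
  have hposlt : ∀ x : Fin n, (x - i).val < n := fun x => (x - i).isLt
  have hmem : ∀ x : Fin n, ((x - i').val ≤ t' ↔ t + 1 ≤ (x - i).val) := by
    intro x
    rw [hsub x]
    have := hposlt x
    split <;> omega
  have hadd : ∀ x : Fin n, (x - i').val ≤ t' → (x - i).val = (x - i').val + (t + 1) := by
    intro x hx
    have h1 := (hmem x).mp hx
    rw [hsub x] at hx ⊢
    simp only [h1, if_pos] at hx ⊢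
    omega
  -- the interval C
  set C : Finset (Fin n) := Finset.univ.filter (fun x => (x - i').val ≤ t') with hC
  have hCcard : C.card = t' + 1 := card_filter_sub_val_le i' t' (by omega)
  -- key pointwise equivalence
  have key : ∀ m : Fin n,
      ((m - i').val ≤ t' ∧ cyclicLT i m (π⁻¹ m)) ↔
        ((π⁻¹ m - i').val ≤ t' ∧ ¬ cyclicLT i' (π⁻¹ m) m) := by
    intro m
    set u := π⁻¹ m with hu
    have hum : u ≠ m := by
      intro h
      apply hfix m
      have hh : π u = m := by rw [hu]; simp
      rw [h] at hh
      exact hh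
    have hne' : (u - i').val ≠ (m - i').val := fun h => hum (sub_val_inj i' h)
    unfold cyclicLT
    constructor
    · rintro ⟨hm, hlt⟩
      have h1 : (m - i).val = (m - i').val + (t + 1) := hadd m hm
      have h2 : t + 1 ≤ (u - i).val := by omega
      have hu' : (u - i').val ≤ t' := (hmem u).mpr h2
      have h3 : (u - i).val = (u - i').val + (t + 1) := hadd u hu'
      exact ⟨hu', by omega⟩
    · rintro ⟨hu', hnlt⟩
      have hml : (m - i').val < (u - i').val := by omega
      have hm : (m - i').val ≤ t' := by omega
      have h1 : (m - i).val = (m - i').val + (t + 1) := hadd m hm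
      have h3 : (u - i).val = (u - i').val + (t + 1) := hadd u hu'
      exact ⟨hm, by omega⟩
  -- the three sets
  have hB : (necklaceOfPerm π⁻¹ i').filter (fun x => (x - i').val ≤ t')
      = C.filter (fun j => cyclicLT i' j (π j)) := by
    rw [necklace_inv, hC, Finset.filter_filter, Finset.filter_filter]
    apply Finset.filter_congr
    intro x _
    tauto
  have hA : (necklaceOfPerm π i).filter (fun x => (x - i').val ≤ t')
      = (C.filter (fun j => ¬ cyclicLT i' j (π j))).image π := by
    ext m
    simp only [necklaceOfPerm, hC, Finset.mem_filter, Finset.mem_univ, true_and,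
      Finset.mem_image]
    constructor
    · intro h
      refine ⟨π⁻¹ m, ?_, by simp⟩
      have := (key m).mp ⟨h.2, h.1⟩
      refine ⟨this.1, ?_⟩
      simpa using this.2
    · rintro ⟨j, ⟨hj1, hj2⟩, rfl⟩
      have := (key (π j)).mpr ⟨by simpa using hj1, by simpa using hj2⟩
      exact ⟨this.2, this.1⟩
  have hAcard : cnt i' (necklaceOfPerm π i) t'
      = (C.filter (fun j => ¬ cyclicLT i' j (π j))).card := by
    unfold cnt
    rw [hA, Finset.card_image_of_injective _ (Equiv.injective _)]
  have hBcard : cnt i' (necklaceOfPerm π⁻¹ i') t'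
      = (C.filter (fun j => cyclicLT i' j (π j))).card := by
    unfold cnt
    rw [hB]
  rw [hAcard, hBcard]
  have := Finset.card_filter_add_card_filter_not
    (s := C) (p := fun j => cyclicLT i' j (π j))
  omega

lemma fix_free_inv {π : Equiv.Perm (Fin n)} (hfix : ∀ x, π x ≠ x) (x : Fin n) : π⁻¹ x ≠ x := by
  intro h
  apply hfix x
  conv_lhs => rw [← h]
  simp

lemma positroid_compl [NeZero n] (π : Equiv.Perm (Fin n)) (hfix : ∀ x, π x ≠ x)
    (J : Finset (Fin n)) (hJ : J ∈ positroid (necklaceOfPerm π)) :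
    Jᶜ ∈ positroid (necklaceOfPerm π⁻¹) := by
  obtain ⟨hcard, hgale⟩ := hJ
  have hcompl_card : ∀ i : Fin n, Jᶜ.card = (necklaceOfPerm π⁻¹ i).card := by
    intro i
    have h1 := necklace_card_add π hfix i
    have h2 : Jᶜ.card + J.card = n := by
      rw [Finset.card_compl]
      have := Finset.card_le_univ J
      simp only [Fintype.card_fin] at *
      omega
    have := hcard i
    omega
  refine ⟨hcompl_card, ?_⟩
  intro i
  rw [finsetLE_iff_cnt _ _ _ (hcompl_card i).symm]
  intro t
  by_cases ht : t + 1 < n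
  · set i' : Fin n := i + ⟨t + 1, ht⟩ with hi'
    set t' : ℕ := n - t - 2 with ht'
    have e1 : cnt i J t + cnt i' J t' = J.card := cnt_split i J ht
    have e2 : cnt i Jᶜ t + cnt i J t = t + 1 := cnt_compl i J (by omega)
    have e3 : cnt i (necklaceOfPerm π⁻¹ i) t + cnt i' (necklaceOfPerm π⁻¹ i) t'
        = (necklaceOfPerm π⁻¹ i).card := cnt_split i _ ht
    have e4 : cnt i' (necklaceOfPerm π⁻¹ i) t' + cnt i' (necklaceOfPerm (π⁻¹)⁻¹ i') t'
        = n - t - 1 := central_identity π⁻¹ (fix_free_inv hfix) i ht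
    rw [inv_inv] at e4
    have e5 : cnt i' J t' ≤ cnt i' (necklaceOfPerm π i') t' :=
      (finsetLE_iff_cnt i' (necklaceOfPerm π i') J (hcard i').symm).mp (hgale i') t'
    have e6 := necklace_card_add π hfix i
    have e7 := hcard i
    omega
  · rw [cnt_eq_card i Jᶜ (by omega), cnt_eq_card i _ (by omega), hcompl_card i]

lemma cyc_rot {a b c d : Fin n} (h : CyclicallyOrdered [a, b, c, d]) :
    CyclicallyOrdered [b, c, d, a] := by
  obtain ⟨k, hk⟩ := h
  refine ⟨k + 3, ?_⟩
  have h1 : [b, c, d, a] = [a, b, c, d].rotate 1 := by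
    simp [List.rotate]
  rw [h1, List.rotate_rotate, ← List.rotate_mod]
  have h2 : (1 + (k + 3)) % [a, b, c, d].length = k % [a, b, c, d].length := by
    simp only [List.length_cons, List.length_nil]
    omega
  rw [h2, List.rotate_mod]
  exact hk

lemma cyc_nodup {l : List (Fin n)} (h : CyclicallyOrdered l) : l.Nodup := by
  obtain ⟨k, hk⟩ := h
  rw [← List.nodup_rotate (n := k)]
  exact hk.nodup

lemma ws_compl {A B : Finset (Fin n)} (h : WeaklySeparated A B) :
    WeaklySeparated Aᶜ Bᶜ := by
  rintro ⟨a, b, a', b', hcyc, ha, ha', hb, hb'⟩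
  apply h
  refine ⟨b, a', b', a, cyc_rot hcyc, ?_, ?_, ?_, ?_⟩ <;>
    simp only [Finset.mem_sdiff, Finset.mem_compl] at * <;> tauto

lemma pairAdd_compl {V V' : Finset (Fin n)} {x y z w : Fin n}
    (hV' : ∀ u, u ∈ V' ↔ (u ≠ x ∧ u ≠ y ∧ u ≠ z ∧ u ≠ w ∧ u ∉ V))
    (hzx : z ≠ x) (hzy : z ≠ y) (hwx : w ≠ x) (hwy : w ≠ y)
    (hz : z ∉ V) (hw : w ∉ V) :
    (pairAdd V x y)ᶜ = pairAdd V' z w := by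
  ext u
  simp only [pairAdd, Finset.mem_compl, Finset.mem_insert, hV']
  constructor
  · intro h
    push_neg at h
    obtain ⟨h1, h2, h3⟩ := h
    by_cases hz' : u = z
    · exact Or.inl hz'
    · by_cases hw' : u = w
      · exact Or.inr (Or.inl hw')
      · exact Or.inr (Or.inr ⟨h1, h2, hz', hw', h3⟩)
  · rintro (rfl | rfl | ⟨h1, h2, h3, h4, h5⟩)
    · push_neg
      exact ⟨hzx, hzy, hz⟩
    · push_neg
      exact ⟨hwx, hwy, hw⟩
    · push_neg
      exact ⟨h1, h2, h5⟩

lemma mut_compl {W1 W2 : Finset (Finset (Fin n))} (h : Mutation W1 W2) :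
    Mutation (W1.image compl) (W2.image compl) := by
  obtain ⟨V, a, b, c, d, hcyc, ha, hb, hc, hd, m1, m2, m3, m4, m5, heq⟩ := h
  have hnd := cyc_nodup hcyc
  simp only [List.nodup_cons, List.mem_cons, List.not_mem_nil, or_false,
    List.mem_singleton, List.nodup_nil, and_true, not_or] at hnd
  obtain ⟨⟨hab, hac, had⟩, ⟨hbc, hbd⟩, hcd, -⟩ := hnd
  set V' : Finset (Fin n) := (insert a (insert b (insert c (insert d V))))ᶜ with hV'def
  have hV' : ∀ u, u ∈ V' ↔ (u ≠ a ∧ u ≠ b ∧ u ≠ c ∧ u ≠ d ∧ u ∉ V) := by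
    intro u
    simp only [hV'def, Finset.mem_compl, Finset.mem_insert]
    push_neg
    tauto
  have c1 : (pairAdd V a b)ᶜ = pairAdd V' c d :=
    pairAdd_compl (fun u => (hV' u).trans (by tauto)) (Ne.symm hac) (Ne.symm hbc)
      (Ne.symm had) (Ne.symm hbd) hc hd
  have c2 : (pairAdd V b c)ᶜ = pairAdd V' d a :=
    pairAdd_compl (fun u => (hV' u).trans (by tauto)) (Ne.symm hbd) (Ne.symm hcd) hab hac hd ha
  have c3 : (pairAdd V c d)ᶜ = pairAdd V' a b :=
    pairAdd_compl (fun u => (hV' u).trans (by tauto)) hac had hbc hbd ha hb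
  have c4 : (pairAdd V d a)ᶜ = pairAdd V' b c :=
    pairAdd_compl (fun u => (hV' u).trans (by tauto)) hbd (Ne.symm hab) hcd (Ne.symm hac) hb hc
  have c5 : (pairAdd V a c)ᶜ = pairAdd V' b d :=
    pairAdd_compl (fun u => (hV' u).trans (by tauto)) (Ne.symm hab) hbc (Ne.symm had)
      (Ne.symm hcd) hb hd
  have c6 : (pairAdd V b d)ᶜ = pairAdd V' c a :=
    pairAdd_compl (fun u => (hV' u).trans (by tauto)) (Ne.symm hbc) hcd hab had hc ha
  refine ⟨V', b, c, d, a, cyc_rot hcyc, ?_, ?_, ?_, ?_, ?_, ?_, ?_, ?_, ?_, ?_⟩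
  · exact fun h => ((hV' b).mp h).2.1 rfl
  · exact fun h => ((hV' c).mp h).2.2.1 rfl
  · exact fun h => ((hV' d).mp h).2.2.2.1 rfl
  · exact fun h => ((hV' a).mp h).1 rfl
  · rw [← c4]; exact Finset.mem_image_of_mem _ m4
  · rw [← c1]; exact Finset.mem_image_of_mem _ m1
  · rw [← c2]; exact Finset.mem_image_of_mem _ m2
  · rw [← c3]; exact Finset.mem_image_of_mem _ m3
  · rw [← c5]; exact Finset.mem_image_of_mem _ m5
  · rw [heq, Finset.image_insert, Finset.image_erase compl_injective]
    rw [show (pairAdd V b d)ᶜ = pairAdd V' c a from c6,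
      show (pairAdd V a c)ᶜ = pairAdd V' b d from c5]

lemma cmap_cmap (W : Finset (Finset (Fin n))) : (W.image compl).image compl = W := by
  rw [Finset.image_image]
  have : (compl ∘ compl : Finset (Fin n) → Finset (Fin n)) = id := by
    funext x
    simp
  rw [this, Finset.image_id]

lemma mut_compl_iff {W1 W2 : Finset (Finset (Fin n))} :
    Mutation (W1.image compl) (W2.image compl) ↔ Mutation W1 W2 := by
  constructor
  · intro h
    have := mut_compl h
    rwa [cmap_cmap, cmap_cmap] at this
  · exact mut_compl

lemma wscover_compl [NeZero n] (π : Equiv.Perm (Fin n)) (hfix : ∀ x, π x ≠ x)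
    {W : Finset (Finset (Fin n))} (h : IsWSCOver (necklaceOfPerm π) W) :
    IsWSCOver (necklaceOfPerm π⁻¹) (W.image compl) := by
  constructor
  · intro A hA B hB
    obtain ⟨a, ha, rfl⟩ := Finset.mem_image.mp hA
    obtain ⟨b, hb, rfl⟩ := Finset.mem_image.mp hB
    exact ws_compl (h.1 a ha b hb)
  · intro A hA
    obtain ⟨a, ha, rfl⟩ := Finset.mem_image.mp hA
    exact positroid_compl π hfix a (h.2 a ha)

lemma maxwsc_compl [NeZero n] (π : Equiv.Perm (Fin n)) (hfix : ∀ x, π x ≠ x)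
    {W : Finset (Finset (Fin n))} (h : IsMaxWSCOver (necklaceOfPerm π) W) :
    IsMaxWSCOver (necklaceOfPerm π⁻¹) (W.image compl) := by
  refine ⟨wscover_compl π hfix h.1, ?_⟩
  intro W' hW' hsub
  have h2 : IsWSCOver (necklaceOfPerm π) (W'.image compl) := by
    have := wscover_compl π⁻¹ (fix_free_inv hfix) hW'
    rwa [inv_inv] at this
  have h3 : W ⊆ W'.image compl := by
    have := Finset.image_subset_image (f := compl) hsub
    rwa [cmap_cmap] at this
  have h4 := h.2 _ h2 h3
  rw [← h4, cmap_cmap]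

lemma fix_free_of_connected (hn : 3 ≤ n) (π : Equiv.Perm (Fin n))
    (hπ : IsConnectedPerm π) : ∀ x, π x ≠ x := by
  haveI : NeZero n := ⟨by omega⟩
  intro f hf
  apply hπ
  have hone : ((1 : Fin n)).val = 1 := by
    rw [Fin.val_one', Nat.mod_eq_of_lt (by omega)]
  have hint1 : circInterval f (f + 1) = {f} := by
    ext x
    simp only [circInterval, Finset.mem_filter, Finset.mem_univ, true_and,
      Finset.mem_singleton]
    have h1 : f + 1 - f = 1 := by abel
    rw [h1, hone]
    constructor
    · intro hx
      have h2 : (x - f).val = 0 := by omega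
      have h3 : x - f = 0 := Fin.val_injective (by simpa using h2)
      exact sub_eq_zero.mp h3
    · rintro rfl
      simp
  have hval : (f - (f + 1)).val = n - 1 := by
    have h1 : f - (f + 1) = 0 - 1 := by abel
    rw [h1, sub_val_eq, hone]
    simp
  have hint2 : circInterval (f + 1) f = {f}ᶜ := by
    ext x
    simp only [circInterval, Finset.mem_filter, Finset.mem_univ, true_and,
      Finset.mem_compl, Finset.mem_singleton]
    rw [hval]
    constructor
    · intro hx hxf
      subst hxf
      omega
    · intro hx
      have h1 : (x - (f + 1)).val < n := (x - (f + 1)).isLt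
      rcases lt_or_eq_of_le (Nat.le_of_lt_succ (by omega : (x - (f+1)).val < (n-1) + 1)) with h | h
      · exact h
      · exfalso
        apply hx
        have h2 : x - (f + 1) = f - (f + 1) := Fin.val_injective (by rw [hval]; exact h)
        exact sub_left_injective h2
  refine ⟨f, f + 1, ?_, ?_, ?_⟩
  · intro h
    have := congrArg (fun z => (z - f).val) h
    simp only [sub_self, Fin.val_zero] at this
    rw [show f + 1 - f = 1 by abel, hone] at this
    omega
  · rw [hint1]
    simp [hf]
  · rw [hint2]
    ext y
    simp only [Finset.mem_image, Finset.mem_compl, Finset.mem_singleton]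
    constructor
    · rintro ⟨x, hx, rfl⟩
      intro h
      apply hx
      have : π x = π f := by rw [h, hf]
      exact π.injective this
    · intro hy
      refine ⟨π⁻¹ y, ?_, by simp⟩
      intro h
      apply hy
      have : π (π⁻¹ y) = π f := by rw [h]
      simpa [hf] using this

theorem exchangeGraph_iso_of_inv (n : ℕ) (hn : 3 ≤ n) (π : Equiv.Perm (Fin n))
    (hπ : IsConnectedPerm π) (hπ' : IsConnectedPerm π⁻¹) :
    Nonempty (exchangeGraph (necklaceOfPerm π) ≃g exchangeGraph (necklaceOfPerm π⁻¹)) := by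
  haveI : NeZero n := ⟨by omega⟩
  have hfix : ∀ x, π x ≠ x := fix_free_of_connected hn π hπ
  let F : MWSC (necklaceOfPerm π) → MWSC (necklaceOfPerm π⁻¹) :=
    fun W => ⟨W.1.image compl, maxwsc_compl π hfix W.2⟩
  let G : MWSC (necklaceOfPerm π⁻¹) → MWSC (necklaceOfPerm π) :=
    fun W => ⟨W.1.image compl, by
      have h := maxwsc_compl π⁻¹ (fix_free_inv hfix) W.2
      rwa [inv_inv] at h⟩
  have hFG : ∀ W, G (F W) = W := fun W => Subtype.ext (cmap_cmap W.1)
  have hGF : ∀ W, F (G W) = W := fun W => Subtype.ext (cmap_cmap W.1)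
  refine ⟨⟨⟨F, G, hFG, hGF⟩, ?_⟩⟩
  intro W1 W2
  have hiff : Mutation (F W1).1 (F W2).1 ↔ Mutation W1.1 W2.1 := mut_compl_iff
  have hiff2 : Mutation (F W2).1 (F W1).1 ↔ Mutation W2.1 W1.1 := mut_compl_iff
  have hne : F W1 = F W2 ↔ W1 = W2 :=
    ⟨fun h => by rw [← hFG W1, h, hFG], fun h => by rw [h]⟩
  show (exchangeGraph (necklaceOfPerm π⁻¹)).Adj (F W1) (F W2) ↔
    (exchangeGraph (necklaceOfPerm π)).Adj W1 W2
  simp only [exchangeGraph, SimpleGraph.fromRel_adj]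
  rw [hiff, hiff2]
  constructor
  · rintro ⟨h1, h2⟩
    exact ⟨fun he => h1 (hne.mpr he), h2⟩
  · rintro ⟨h1, h2⟩
    exact ⟨fun he => h1 (hne.mp he), h2⟩

end WS
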